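/- Every endomorphism f of the cosetal extension N →k→ N ⋊_{E,φ}^g H →e→ H (with N an abelian group) is an automorphism; explicitly, f has the form f([n],h) = ([t(h)·n], h) for some function t : H → N, and ([n],h) ↦ ([t(h)^{-1}·n], h) is its inverse. -/
import Mathlib


/-- An admissible H-indexed equivalence relation E on N: for each h an equivalence
relation ∼^h on N such that ∼^1 is equality, left multiplication preserves ∼^h, and
n ∼^h n' implies n ∼^{h·y} n'. -/
structure IndexedEqv (H N : Type*) [Monoid H] [Monoid N] where
  r : H → N → N → Prop
  iseqv : ∀ h, Equivalence (r h)
  one_eq : ∀ {n n' : N}, r 1 n n' → n = n'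
  mul_left : ∀ (x : N) {h : H} {n n' : N}, r h n n' → r h (x * n) (x * n')
  mul_right : ∀ (y : H) {h : H} {n n' : N}, r h n n' → r (h * y) n n'

def IndexedEqv.setoid {H N : Type*} [Monoid H] [Monoid N] (E : IndexedEqv H N) (h : H) :
    Setoid N := ⟨E.r h, E.iseqv h⟩

/-- α : H × N → N is a compatible action for the admissible indexed equivalence relation E. -/
structure CompatibleAction {H N : Type*} [Monoid H] [Monoid N] (E : IndexedEqv H N)
    (α : H → N → N) : Prop where
  c1 : ∀ (h : H) (n n' x : N), E.r h n n' → E.r h (n * α h x) (n' * α h x)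
  c2 : ∀ (h : H) (n n' : N) (x : H), E.r h n n' → E.r (x * h) (α x n) (α x n')
  c3 : ∀ (h : H) (n n' : N), E.r h (α h (n * n')) (α h n * α h n')
  c4 : ∀ (h h' : H) (n : N), E.r (h * h') (α (h * h') n) (α h (α h' n))
  c5 : ∀ h : H, E.r h (α h 1) 1
  c6 : ∀ n : N, E.r 1 (α 1 n) n

/-- The carrier ⨆_{h ∈ H} N/∼^h of the weak semidirect product. -/
def WProd {H N : Type*} [Monoid H] [Monoid N] (E : IndexedEqv H N) : Type _ :=
  (h : H) × Quotient (E.setoid h)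

/-- The element ([n], h). -/
def wmk {H N : Type*} [Monoid H] [Monoid N] (E : IndexedEqv H N) (h : H) (n : N) : WProd E :=
  ⟨h, Quotient.mk (E.setoid h) n⟩

/-- The multiplication ([n],h)·([n'],h') = ([n·α(h,n')], h·h') of the weak semidirect
product N ⋊_{E,α} H. -/
def wmul {H N : Type*} [Monoid H] [Monoid N] (E : IndexedEqv H N) {α : H → N → N}
    (hα : CompatibleAction E α) : WProd E → WProd E → WProd E :=
  fun x y =>
    ⟨x.1 * y.1,
      Quotient.liftOn₂ x.2 y.2
        (fun n n' => Quotient.mk (E.setoid (x.1 * y.1)) (n * α x.1 n'))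
        (fun a c b d hab hcd =>
          Quotient.sound
            ((E.iseqv (x.1 * y.1)).trans
              (E.mul_right y.1 (hα.c1 x.1 a b c hab))
              (E.mul_left b (hα.c2 y.1 c d x.1 hcd))))⟩

/-- A factor set relative to the compatible pair (E, α), with abelian group kernel N:
g(h,1) ∼^h 1 ∼^h g(1,h) and g(x,y)·g(xy,z) ∼^{xyz} α(x, g(y,z))·g(x, yz). -/
def IsFactorSet {H N : Type*} [Monoid H] [CommGroup N] (E : IndexedEqv H N)
    (α : H → N → N) (g : H → H → N) : Prop :=
  (∀ h : H, E.r h (g h 1) 1) ∧ (∀ h : H, E.r h (g 1 h) 1) ∧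
  ∀ x y z : H, E.r (x * y * z) (g x y * g (x * y) z) (α x (g y z) * g x (y * z))

/-- The multiplication ([n],h)·([n'],h') = ([n·α(h,n')·g(h,h')], h·h') of
N ⋊_{E,α}^g H. -/
def wgmul {H N : Type*} [Monoid H] [CommGroup N] (E : IndexedEqv H N) {α : H → N → N}
    (g : H → H → N) (hα : CompatibleAction E α) : WProd E → WProd E → WProd E :=
  fun x y =>
    ⟨x.1 * y.1,
      Quotient.liftOn₂ x.2 y.2
        (fun n n' => Quotient.mk (E.setoid (x.1 * y.1)) (n * α x.1 n' * g x.1 y.1))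
        (by
          intro a c b d hab hcd
          apply Quotient.sound
          have h1 : E.r (x.1 * y.1) (a * α x.1 c) (b * α x.1 d) :=
            (E.iseqv _).trans (E.mul_right y.1 (hα.c1 x.1 a b c hab))
              (E.mul_left b (hα.c2 y.1 c d x.1 hcd))
          have h2 := E.mul_left (g x.1 y.1) h1
          show E.r (x.1 * y.1) (a * α x.1 c * g x.1 y.1) (b * α x.1 d * g x.1 y.1)
          simpa [mul_comm, mul_assoc, mul_left_comm] using h2)⟩

lemma aux_sigmaEq {H N : Type*} [Monoid H] [Monoid N] (E : IndexedEqv H N)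
    {h1 h2 : H} (hh : h1 = h2) {a b : N} (hr : E.r h2 a b) :
    (⟨h1, Quotient.mk (E.setoid h1) a⟩ : WProd E) = wmk E h2 b := by
  subst hh
  exact congrArg (Sigma.mk h1) (Quotient.sound hr)

lemma aux_alphaOne {H N : Type*} [Monoid H] [Monoid N] (E : IndexedEqv H N)
    {α : H → N → N} (hα : CompatibleAction E α) (n : N) : α 1 n = n :=
  E.one_eq (hα.c6 n)

lemma aux_lemA {H N : Type*} [Monoid H] [CommGroup N] (E : IndexedEqv H N)
    {α : H → N → N} (g : H → H → N) (hα : CompatibleAction E α)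
    (hg : IsFactorSet E α g) (n : N) (h : H) (m : N) :
    wgmul E g hα (wmk E 1 n) (wmk E h m) = wmk E h (n * m) := by
  have h2 := E.mul_left (n * m) (hg.2.1 h)
  rw [mul_one] at h2
  have h1 : E.r h (n * α 1 m * g 1 h) (n * m) := by
    rw [aux_alphaOne E hα]
    exact h2
  exact aux_sigmaEq E (one_mul h) h1

/-- Every endomorphism f of the cosetal extension
N →k→ N ⋊_{E,α}^g H →e→ H (N an abelian group) — a monoid homomorphism with f∘k = k and
e∘f = e — is an automorphism: f([n],h) = ([t(h)·n],h) for some t : H → N and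
([n],h) ↦ ([t(h)⁻¹·n],h) is a (well-defined) two-sided inverse. -/
theorem endomorphism_is_automorphism {H N : Type*} [Monoid H] [CommGroup N]
    (E : IndexedEqv H N) (α : H → N → N) (hα : CompatibleAction E α)
    (g : H → H → N) (hg : IsFactorSet E α g)
    (f : WProd E → WProd E)
    (hmul : ∀ x y, f (wgmul E g hα x y) = wgmul E g hα (f x) (f y))
    (hone : f (wmk E 1 1) = wmk E 1 1)
    (hk : ∀ n : N, f (wmk E 1 n) = wmk E 1 n)
    (he : ∀ x : WProd E, (f x).1 = x.1) :
    ∃ t : H → N,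
      (∀ (h : H) (n : N), f (wmk E h n) = wmk E h (t h * n)) ∧
      ∃ finv : WProd E → WProd E,
        (∀ (h : H) (n : N), finv (wmk E h n) = wmk E h ((t h)⁻¹ * n)) ∧
        (∀ x, finv (f x) = x) ∧ (∀ x, f (finv x) = x) := by
  classical
  have key : ∀ h : H, ∃ m : N, f (wmk E h 1) = wmk E h m := by
    intro h
    rcases hy : f (wmk E h 1) with ⟨h', q⟩
    have hh : h' = h := by
      have := he (wmk E h 1)
      rw [hy] at this
      exact this
    subst hh
    obtain ⟨m, rfl⟩ := q.exists_rep
    exact ⟨m, rfl⟩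
  set t : H → N := fun h => Classical.choose (key h) with ht_def
  have tspec : ∀ h, f (wmk E h 1) = wmk E h (t h) := fun h => Classical.choose_spec (key h)
  have ht : ∀ (h : H) (n : N), f (wmk E h n) = wmk E h (t h * n) := by
    intro h n
    have hA := aux_lemA E g hα hg n h 1
    rw [mul_one] at hA
    calc f (wmk E h n) = f (wgmul E g hα (wmk E 1 n) (wmk E h 1)) := by rw [hA]
      _ = wgmul E g hα (f (wmk E 1 n)) (f (wmk E h 1)) := hmul _ _
      _ = wgmul E g hα (wmk E 1 n) (wmk E h (t h)) := by rw [hk, tspec]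
      _ = wmk E h (n * t h) := aux_lemA E g hα hg n h (t h)
      _ = wmk E h (t h * n) := by rw [mul_comm]
  refine ⟨t, ht, fun x => wmk E x.1 ((t x.1)⁻¹ * x.2.out), ?_, ?_, ?_⟩
  · intro h n
    have hout : E.r h (Quotient.mk (E.setoid h) n).out n := Quotient.mk_out (s := E.setoid h) n
    exact aux_sigmaEq E rfl (E.mul_left ((t h)⁻¹) hout)
  · rintro ⟨h, q⟩
    induction q using Quotient.ind with
    | _ n =>
      show wmk E _ _ = _
      rw [show (⟨h, Quotient.mk (E.setoid h) n⟩ : WProd E) = wmk E h n from rfl, ht]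
      show wmk E h ((t h)⁻¹ * (Quotient.mk (E.setoid h) (t h * n)).out) = wmk E h n
      have hout : E.r h (Quotient.mk (E.setoid h) (t h * n)).out (t h * n) :=
        Quotient.mk_out (s := E.setoid h) _
      have := E.mul_left ((t h)⁻¹) hout
      rw [inv_mul_cancel_left] at this
      exact aux_sigmaEq E rfl this
  · rintro ⟨h, q⟩
    induction q using Quotient.ind with
    | _ n =>
      show f (wmk E h ((t h)⁻¹ * (Quotient.mk (E.setoid h) n).out)) = wmk E h n
      rw [ht, mul_inv_cancel_left]
      have hout : E.r h (Quotient.mk (E.setoid h) n).out n := Quotient.mk_out (s := E.setoid h) n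
      exact aux_sigmaEq E rfl hout
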